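/- Let x, y, q be complex numbers with |q| < 1. Then Σ_{i,j≥0} x^i · y^(i+2j) · q^(2i²+4j²+4ij−i) / ((q²;q²)_i · (q⁴;q⁴)_j) = Σ_{i,j≥0} (−1)^j · (x;q²)_j · y^(i+j) · q^(i²+j²+2ij) / ((q²;q²)_i · (q²;q²)_j). -/

import Mathlib

/-- Finite q-Pochhammer symbol `(a; q)_n = ∏_{k=0}^{n-1} (1 - a q^k)`. -/
noncomputable def qPoch (a q : ℂ) (n : ℕ) : ℂ := ∏ k ∈ Finset.range n, (1 - a * q ^ k)

open Finset

lemma qPoch_succ (a Q : ℂ) (n : ℕ) :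
    qPoch a Q (n+1) = qPoch a Q n * (1 - a * Q ^ n) := Finset.prod_range_succ _ _

lemma qPoch_zero (a Q : ℂ) : qPoch a Q 0 = 1 := Finset.prod_range_zero _

namespace Aux

variable (Q : ℂ)

noncomputable def E (n : ℕ) : ℂ := qPoch Q Q n
noncomputable def Gp (n : ℕ) : ℂ := qPoch (Q^2) (Q^2) n
noncomputable def cc (N m : ℕ) : ℂ := (E Q m * E Q (N - m))⁻¹
noncomputable def Sg (N : ℕ) : ℂ := ∑ m ∈ range (N+1), (-1)^m * cc Q N m
noncomputable def Vg (N : ℕ) : ℂ := ∑ m ∈ range (N+1), (-1)^m * Q^m * cc Q N m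

lemma E_zero : E Q 0 = 1 := qPoch_zero _ _

lemma E_succ (n : ℕ) : E Q (n+1) = E Q n * (1 - Q^(n+1)) := by
  rw [E, qPoch_succ, ← pow_succ']; rfl

lemma Gp_zero : Gp Q 0 = 1 := qPoch_zero _ _

lemma Gp_succ (n : ℕ) : Gp Q (n+1) = Gp Q n * (1 - Q^(2*n+2)) := by
  have h2 : Q^2 * (Q^2)^n = Q^(2*n+2) := by
    rw [← pow_succ', ← pow_mul]
    congr 1 <;> omega
  rw [Gp, qPoch_succ, h2]; rfl

variable {Q}
variable (hQ : ∀ m : ℕ, 1 - Q^(m+1) ≠ 0)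
include hQ

lemma E_ne (n : ℕ) : E Q n ≠ 0 := by
  induction n with
  | zero => simp [E_zero]
  | succ m ih => rw [E_succ]; exact mul_ne_zero ih (hQ m)

lemma Gp_ne (n : ℕ) : Gp Q n ≠ 0 := by
  induction n with
  | zero => simp [Gp_zero]
  | succ m ih =>
    rw [Gp_succ]
    have h := hQ (2*m+1)
    have : 2*m+1+1 = 2*m+2 := by omega
    rw [this] at h
    exact mul_ne_zero ih h


lemma cc_zero' (N : ℕ) : (1 - Q^(N+1)) * cc Q (N+1) 0 = cc Q N 0 := by
  have hE := E_ne hQ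
  rw [cc, cc]
  simp only [Nat.sub_zero, E_zero, one_mul]
  rw [E_succ, mul_inv]
  field_simp
  rw [div_eq_div_iff (mul_ne_zero (hQ N) (hE N)) (hE N)]
  ring

lemma cc_top' (N : ℕ) : (1 - Q^(N+1)) * cc Q (N+1) (N+1) = cc Q N N := by
  have hE := E_ne hQ
  rw [cc, cc]
  simp only [Nat.sub_self, E_zero, mul_one]
  rw [E_succ, mul_inv]
  field_simp
  rw [div_eq_div_iff (mul_ne_zero (hQ N) (hE N)) (hE N)]
  ring

lemma rule1 (N k : ℕ) (h1 : 1 ≤ k) (h2 : k ≤ N) :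
    (1 - Q^(N+1)) * cc Q (N+1) k = cc Q N k + Q^(N+1-k) * cc Q N (k-1) := by
  obtain ⟨k', rfl⟩ : ∃ k', k = k' + 1 := ⟨k-1, by omega⟩
  obtain ⟨m, rfl⟩ : ∃ m, N = k' + 1 + m := ⟨N - (k'+1), by omega⟩
  have hE := E_ne hQ
  have e1 : k' + 1 + m + 1 - (k' + 1) = m + 1 := by omega
  have e2 : k' + 1 + m - (k' + 1) = m := by omega
  have e3 : k' + 1 - 1 = k' := by omega
  have e4 : k' + 1 + m - k' = m + 1 := by omega
  have e5 : k' + 1 + m + 1 - (k' + 1) = m + 1 := by omega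
  rw [cc, cc, cc, e1, e2, e3, e4]
  have hp : Q^(k' + 1 + m + 1) = Q^(k'+1) * Q^(m+1) := by
    rw [← pow_add]; congr 1 <;> omega
  rw [hp, E_succ Q k', E_succ Q m]
  have h3 : (1:ℂ) - Q^(k'+1) ≠ 0 := hQ k'
  have h4 : (1:ℂ) - Q^(m+1) ≠ 0 := hQ m
  have hek := hE k'
  have hem := hE m
  rw [mul_inv, mul_inv, mul_inv, mul_inv, mul_inv, mul_inv]
  field_simp
  ring

lemma rule2 (N k : ℕ) (h1 : 1 ≤ k) (h2 : k ≤ N) :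
    (1 - Q^(N+1)) * cc Q (N+1) k = Q^k * cc Q N k + cc Q N (k-1) := by
  obtain ⟨k', rfl⟩ : ∃ k', k = k' + 1 := ⟨k-1, by omega⟩
  obtain ⟨m, rfl⟩ : ∃ m, N = k' + 1 + m := ⟨N - (k'+1), by omega⟩
  have hE := E_ne hQ
  have e1 : k' + 1 + m + 1 - (k' + 1) = m + 1 := by omega
  have e2 : k' + 1 + m - (k' + 1) = m := by omega
  have e3 : k' + 1 - 1 = k' := by omega
  have e4 : k' + 1 + m - k' = m + 1 := by omega
  rw [cc, cc, cc, e1, e2, e3, e4]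
  have hp : Q^(k' + 1 + m + 1) = Q^(k'+1) * Q^(m+1) := by
    rw [← pow_add]; congr 1 <;> omega
  rw [hp, E_succ Q k', E_succ Q m]
  have h3 : (1:ℂ) - Q^(k'+1) ≠ 0 := hQ k'
  have h4 : (1:ℂ) - Q^(m+1) ≠ 0 := hQ m
  have hek := hE k'
  have hem := hE m
  rw [mul_inv, mul_inv, mul_inv, mul_inv, mul_inv, mul_inv]
  field_simp
  ring

omit hQ in
lemma peel (f : ℕ → ℂ) (N : ℕ) :
    ∑ k ∈ range (N+2), f k = f 0 + (∑ k ∈ range N, f (k+1)) + f (N+1) := by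
  rw [Finset.sum_range_succ, Finset.sum_range_succ']
  ring

omit hQ in
lemma Sg_split (N : ℕ) :
    Sg Q N = (∑ k ∈ range N, (-1:ℂ)^(k+1) * cc Q N (k+1)) + cc Q N 0 := by
  rw [Sg, Finset.sum_range_succ']
  norm_num

omit hQ in
lemma Sg_split' (N : ℕ) :
    Sg Q N = (∑ k ∈ range N, (-1:ℂ)^k * cc Q N k) + (-1)^N * cc Q N N := by
  rw [Sg, Finset.sum_range_succ]

omit hQ in
lemma Vg_split (N : ℕ) :
    Vg Q N = (∑ k ∈ range N, (-1:ℂ)^(k+1) * Q^(k+1) * cc Q N (k+1)) + cc Q N 0 := by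
  rw [Vg, Finset.sum_range_succ']
  norm_num

lemma recS (N : ℕ) : (1 - Q^(N+1)) * Sg Q (N+1) = Vg Q N - Sg Q N := by
  rw [Sg, Finset.mul_sum]
  have hp : ∀ k, (1 - Q^(N+1)) * ((-1:ℂ)^k * cc Q (N+1) k)
      = (-1)^k * ((1 - Q^(N+1)) * cc Q (N+1) k) := fun k => by ring
  rw [show N + 1 + 1 = N + 2 from rfl]
  rw [peel (fun k => (1 - Q^(N+1)) * ((-1:ℂ)^k * cc Q (N+1) k)) N]
  rw [hp 0, hp (N+1), cc_zero' hQ, cc_top' hQ]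
  have hmid : ∀ k ∈ range N, (1 - Q^(N+1)) * ((-1:ℂ)^(k+1) * cc Q (N+1) (k+1))
      = (-1:ℂ)^(k+1) * Q^(k+1) * cc Q N (k+1) + (-((-1:ℂ)^k * cc Q N k)) := by
    intro k hk
    have hk' : k < N := mem_range.mp hk
    have h := rule2 hQ N (k+1) (by omega) (by omega)
    have e : k + 1 - 1 = k := by omega
    rw [e] at h
    calc (1 - Q^(N+1)) * ((-1:ℂ)^(k+1) * cc Q (N+1) (k+1))
        = (-1:ℂ)^(k+1) * ((1 - Q^(N+1)) * cc Q (N+1) (k+1)) := by ring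
      _ = (-1:ℂ)^(k+1) * (Q^(k+1) * cc Q N (k+1) + cc Q N k) := by rw [h]
      _ = (-1:ℂ)^(k+1) * Q^(k+1) * cc Q N (k+1) + (-((-1:ℂ)^k * cc Q N k)) := by ring
  rw [Finset.sum_congr rfl hmid, Finset.sum_add_distrib, Finset.sum_neg_distrib]
  rw [Vg_split, Sg_split']
  ring

lemma recV (N : ℕ) : (1 - Q^(N+1)) * Vg Q (N+1) = Vg Q N - Q^(N+1) * Sg Q N := by
  rw [Vg, Finset.mul_sum]
  rw [show N + 1 + 1 = N + 2 from rfl]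
  rw [peel (fun k => (1 - Q^(N+1)) * ((-1:ℂ)^k * Q^k * cc Q (N+1) k)) N]
  have h0 : (1 - Q^(N+1)) * ((-1:ℂ)^0 * Q^0 * cc Q (N+1) 0) = cc Q N 0 := by
    have := cc_zero' hQ N
    simp only [pow_zero, one_mul]
    linear_combination this
  have htop : (1 - Q^(N+1)) * ((-1:ℂ)^(N+1) * Q^(N+1) * cc Q (N+1) (N+1))
      = (-1:ℂ)^(N+1) * Q^(N+1) * cc Q N N := by
    have := cc_top' hQ N
    calc (1 - Q^(N+1)) * ((-1:ℂ)^(N+1) * Q^(N+1) * cc Q (N+1) (N+1))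
        = (-1:ℂ)^(N+1) * Q^(N+1) * ((1 - Q^(N+1)) * cc Q (N+1) (N+1)) := by ring
      _ = (-1:ℂ)^(N+1) * Q^(N+1) * cc Q N N := by rw [this]
  rw [h0, htop]
  have hmid : ∀ k ∈ range N, (1 - Q^(N+1)) * ((-1:ℂ)^(k+1) * Q^(k+1) * cc Q (N+1) (k+1))
      = (-1:ℂ)^(k+1) * Q^(k+1) * cc Q N (k+1)
        + (-(Q^(N+1) * ((-1:ℂ)^k * cc Q N k))) := by
    intro k hk
    have hk' : k < N := mem_range.mp hk
    have h := rule1 hQ N (k+1) (by omega) (by omega)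
    have e : k + 1 - 1 = k := by omega
    rw [e] at h
    have hpw : Q^(k+1) * Q^(N+1-(k+1)) = Q^(N+1) := by
      rw [← pow_add]; congr 1; omega
    calc (1 - Q^(N+1)) * ((-1:ℂ)^(k+1) * Q^(k+1) * cc Q (N+1) (k+1))
        = (-1:ℂ)^(k+1) * Q^(k+1) * ((1 - Q^(N+1)) * cc Q (N+1) (k+1)) := by ring
      _ = (-1:ℂ)^(k+1) * Q^(k+1) * (cc Q N (k+1) + Q^(N+1-(k+1)) * cc Q N k) := by rw [h]
      _ = (-1:ℂ)^(k+1) * Q^(k+1) * cc Q N (k+1)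
          + (-1:ℂ)^(k+1) * (Q^(k+1) * Q^(N+1-(k+1))) * cc Q N k := by ring
      _ = (-1:ℂ)^(k+1) * Q^(k+1) * cc Q N (k+1)
          + (-(Q^(N+1) * ((-1:ℂ)^k * cc Q N k))) := by rw [hpw]; ring
  rw [Finset.sum_congr rfl hmid, Finset.sum_add_distrib, Finset.sum_neg_distrib,
    ← Finset.mul_sum]
  rw [Vg_split, Sg_split']
  ring

lemma gauss (t : ℕ) :
    Sg Q (2*t) = (Gp Q t)⁻¹ ∧ Sg Q (2*t+1) = 0 ∧
      Vg Q (2*t) = (Gp Q t)⁻¹ ∧ Vg Q (2*t+1) = (Gp Q t)⁻¹ := by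
  induction t with
  | zero =>
    have hE1 : E Q 1 = 1 - Q^1 := by rw [show (1:ℕ) = 0 + 1 from rfl, E_succ, E_zero, one_mul]
    have h1 : (1:ℂ) - Q^1 ≠ 0 := hQ 0
    constructor
    · simp [Sg, cc, E_zero, Gp_zero]
    constructor
    · show Sg Q 1 = 0
      rw [Sg]
      rw [show (1:ℕ)+1 = 2 from rfl, Finset.sum_range_succ, Finset.sum_range_one]
      simp [cc, E_zero, hE1]
    constructor
    · simp [Vg, cc, E_zero, Gp_zero]
    · show Vg Q 1 = (Gp Q 0)⁻¹
      rw [Vg, Gp_zero]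
      rw [show (1:ℕ)+1 = 2 from rfl, Finset.sum_range_succ, Finset.sum_range_one]
      simp only [cc, E_zero]
      rw [hE1]
      simp only [Nat.sub_self, Nat.sub_zero]
      rw [E_zero]
      rw [pow_one] at h1
      field_simp
      ring
  | succ t ih =>
    obtain ⟨hS0, hS1, hV0, hV1⟩ := ih
    have hGp : Gp Q (t+1) = Gp Q t * (1 - Q^(2*t+2)) := Gp_succ Q t
    have hGne : Gp Q t ≠ 0 := Gp_ne hQ t
    have hGne' : Gp Q (t+1) ≠ 0 := Gp_ne hQ (t+1)
    have hne2 : (1:ℂ) - Q^(2*t+2) ≠ 0 := by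
      have := hQ (2*t+1); rwa [show 2*t+1+1 = 2*t+2 from rfl] at this
    have hne3 : (1:ℂ) - Q^(2*t+3) ≠ 0 := by
      have := hQ (2*t+2); rwa [show 2*t+2+1 = 2*t+3 from rfl] at this
    have hinv : (1 - Q^(2*t+2)) * (Gp Q (t+1))⁻¹ = (Gp Q t)⁻¹ := by
      rw [hGp, mul_inv]
      field_simp
    have hrS : (1 - Q^(2*t+2)) * Sg Q (2*t+2) = (Gp Q t)⁻¹ := by
      have := recS hQ (2*t+1); rw [show 2*t+1+1 = 2*t+2 from rfl] at this
      rw [this, hS1, hV1, sub_zero]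
    have hrV : (1 - Q^(2*t+2)) * Vg Q (2*t+2) = (Gp Q t)⁻¹ := by
      have := recV hQ (2*t+1); rw [show 2*t+1+1 = 2*t+2 from rfl] at this
      rw [this, hS1, hV1, mul_zero, sub_zero]
    have hS2 : Sg Q (2*t+2) = (Gp Q (t+1))⁻¹ := by
      apply mul_left_cancel₀ hne2
      rw [hrS, hinv]
    have hV2 : Vg Q (2*t+2) = (Gp Q (t+1))⁻¹ := by
      apply mul_left_cancel₀ hne2
      rw [hrV, hinv]
    have hS3 : Sg Q (2*t+3) = 0 := by
      have h := recS hQ (2*t+2)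
      rw [show 2*t+2+1 = 2*t+3 from rfl, hS2, hV2, sub_self] at h
      exact (mul_eq_zero.mp h).resolve_left hne3
    have hV3 : Vg Q (2*t+3) = (Gp Q (t+1))⁻¹ := by
      have h := recV hQ (2*t+2)
      rw [show 2*t+2+1 = 2*t+3 from rfl, hS2, hV2] at h
      apply mul_left_cancel₀ hne3
      rw [h]; ring
    refine ⟨?_, ?_, ?_, ?_⟩
    · rwa [show 2*(t+1) = 2*t+2 from by omega]
    · rwa [show 2*(t+1)+1 = 2*t+3 from by omega]
    · rwa [show 2*(t+1) = 2*t+2 from by omega]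
    · rwa [show 2*(t+1)+1 = 2*t+3 from by omega]

omit hQ in
lemma choose_succ_two (k : ℕ) : (k+1).choose 2 = k.choose 2 + k := by
  have h := Nat.choose_succ_succ k 1
  simp only [Nat.choose_one_right] at h
  norm_num at h ⊢
  omega

lemma cauchy (x : ℂ) : ∀ j, qPoch x Q j * (E Q j)⁻¹
    = ∑ k ∈ range (j+1), (-1:ℂ)^k * Q^(k.choose 2) * x^k * cc Q j k := by
  intro j
  induction j with
  | zero => simp [qPoch_zero, E_zero, cc]
  | succ j ih =>
    have hc : (1:ℂ) - Q^(j+1) ≠ 0 := hQ j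
    apply mul_right_cancel₀ hc
    have hL : qPoch x Q (j+1) * (E Q (j+1))⁻¹ * (1 - Q^(j+1))
        = (qPoch x Q j * (E Q j)⁻¹) * (1 - x * Q^j) := by
      rw [qPoch_succ, E_succ, mul_inv]
      field_simp [E_ne hQ j]
    rw [hL, ih]
    conv_rhs => rw [show j+1+1 = j+2 from rfl, Finset.sum_mul]
    rw [peel (fun k => ((-1:ℂ)^k * Q^(k.choose 2) * x^k * cc Q (j+1) k) * (1 - Q^(j+1))) j]
    have h0 : ((-1:ℂ)^0 * Q^(Nat.choose 0 2) * x^0 * cc Q (j+1) 0) * (1 - Q^(j+1))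
        = (-1:ℂ)^0 * Q^(Nat.choose 0 2) * x^0 * cc Q j 0 := by
      simp only [show Nat.choose 0 2 = 0 from rfl, pow_zero, one_mul]
      rw [mul_comm]
      exact cc_zero' hQ j
    have htop : ((-1:ℂ)^(j+1) * Q^((j+1).choose 2) * x^(j+1) * cc Q (j+1) (j+1)) * (1 - Q^(j+1))
        = (-(x*Q^j)) * ((-1:ℂ)^j * Q^(j.choose 2) * x^j * cc Q j j) := by
      have h := cc_top' hQ j
      calc ((-1:ℂ)^(j+1) * Q^((j+1).choose 2) * x^(j+1) * cc Q (j+1) (j+1)) * (1 - Q^(j+1))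
          = ((-1:ℂ)^(j+1) * Q^((j+1).choose 2) * x^(j+1))
            * ((1 - Q^(j+1)) * cc Q (j+1) (j+1)) := by ring
        _ = ((-1:ℂ)^(j+1) * Q^((j+1).choose 2) * x^(j+1)) * cc Q j j := by rw [h]
        _ = (-(x*Q^j)) * ((-1:ℂ)^j * Q^(j.choose 2) * x^j * cc Q j j) := by
            rw [choose_succ_two, pow_add]; ring
    have hmid : ∀ k ∈ range j,
        ((-1:ℂ)^(k+1) * Q^((k+1).choose 2) * x^(k+1) * cc Q (j+1) (k+1)) * (1 - Q^(j+1))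
        = (-1:ℂ)^(k+1) * Q^((k+1).choose 2) * x^(k+1) * cc Q j (k+1)
          + (-(x*Q^j)) * ((-1:ℂ)^k * Q^(k.choose 2) * x^k * cc Q j k) := by
      intro k hk
      have hk' : k < j := mem_range.mp hk
      have h := rule1 hQ j (k+1) (by omega) (by omega)
      rw [show k+1-1 = k from by omega] at h
      have hpw : Q^((k+1).choose 2) * Q^(j+1-(k+1)) = Q^(k.choose 2) * Q^j := by
        rw [choose_succ_two, ← pow_add, ← pow_add]
        congr 1
        omega
      calc ((-1:ℂ)^(k+1) * Q^((k+1).choose 2) * x^(k+1) * cc Q (j+1) (k+1)) * (1 - Q^(j+1))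
          = ((-1:ℂ)^(k+1) * Q^((k+1).choose 2) * x^(k+1))
            * ((1 - Q^(j+1)) * cc Q (j+1) (k+1)) := by ring
        _ = ((-1:ℂ)^(k+1) * Q^((k+1).choose 2) * x^(k+1))
            * (cc Q j (k+1) + Q^(j+1-(k+1)) * cc Q j k) := by rw [h]
        _ = (-1:ℂ)^(k+1) * Q^((k+1).choose 2) * x^(k+1) * cc Q j (k+1)
            + (-1:ℂ)^(k+1) * (Q^((k+1).choose 2) * Q^(j+1-(k+1))) * x^(k+1) * cc Q j k := by
            ring
        _ = (-1:ℂ)^(k+1) * Q^((k+1).choose 2) * x^(k+1) * cc Q j (k+1)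
          + (-(x*Q^j)) * ((-1:ℂ)^k * Q^(k.choose 2) * x^k * cc Q j k) := by
            rw [hpw]; ring
    rw [h0, htop, Finset.sum_congr rfl hmid, Finset.sum_add_distrib, ← Finset.mul_sum]
    have e1 := Finset.sum_range_succ' (fun k => (-1:ℂ)^k * Q^(k.choose 2) * x^k * cc Q j k) j
    have e2 := Finset.sum_range_succ (fun k => (-1:ℂ)^k * Q^(k.choose 2) * x^k * cc Q j k) j
    have e1' : ∑ k ∈ range j, (-1:ℂ)^(k+1) * Q^((k+1).choose 2) * x^(k+1) * cc Q j (k+1)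
        = (∑ k ∈ range (j+1), (-1:ℂ)^k * Q^(k.choose 2) * x^k * cc Q j k)
          - (-1:ℂ)^0 * Q^(Nat.choose 0 2) * x^0 * cc Q j 0 := by
      linear_combination -e1
    have e2' : ∑ k ∈ range j, (-1:ℂ)^k * Q^(k.choose 2) * x^k * cc Q j k
        = (∑ k ∈ range (j+1), (-1:ℂ)^k * Q^(k.choose 2) * x^k * cc Q j k)
          - (-1:ℂ)^j * Q^(j.choose 2) * x^j * cc Q j j := by
      linear_combination -e2
    rw [e1', e2']
    ring

lemma core (x : ℂ) (n : ℕ) :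
    ∑ j ∈ range (n/2+1), x^(n-2*j) * Q^((n-2*j).choose 2) * (E Q (n-2*j) * Gp Q j)⁻¹
    = ∑ j ∈ range (n+1), (-1:ℂ)^j * qPoch x Q j * cc Q n j := by
  have step1 : ∀ j ∈ range (n+1), (-1:ℂ)^j * qPoch x Q j * cc Q n j
      = ∑ k ∈ range (j+1),
          ((-1:ℂ)^j * ((-1:ℂ)^k * Q^(k.choose 2) * x^k * cc Q j k)) * (E Q (n-j))⁻¹ := by
    intro j hj
    have hc := cauchy hQ x j
    have h1 : (-1:ℂ)^j * qPoch x Q j * cc Q n j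
        = (-1:ℂ)^j * (qPoch x Q j * (E Q j)⁻¹) * (E Q (n-j))⁻¹ := by
      rw [cc, mul_inv]; ring
    rw [h1, hc, Finset.mul_sum, Finset.sum_mul]
  rw [Finset.sum_congr rfl step1]
  have hswap : ∀ (j k : ℕ), j ∈ range (n+1) ∧ k ∈ range (j+1)
      ↔ j ∈ Finset.Ico k (n+1) ∧ k ∈ range (n+1) := by
    intro j k
    simp only [Finset.mem_range, Finset.mem_Ico]
    omega
  rw [Finset.sum_comm' hswap]
  have inner : ∀ k ∈ range (n+1),
      (∑ j ∈ Finset.Ico k (n+1),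
        ((-1:ℂ)^j * ((-1:ℂ)^k * Q^(k.choose 2) * x^k * cc Q j k)) * (E Q (n-j))⁻¹)
      = Q^(k.choose 2) * x^k * (E Q k)⁻¹ * Sg Q (n-k) := by
    intro k hk
    have hk' : k ≤ n := by simp only [Finset.mem_range] at hk; omega
    rw [Finset.sum_Ico_eq_sum_range]
    rw [show n+1-k = (n-k)+1 from by omega, Sg, Finset.mul_sum]
    apply Finset.sum_congr rfl
    intro m hm
    have hm' : m ≤ n - k := by simp only [Finset.mem_range] at hm; omega
    have hcc : cc Q (k+m) k = (E Q k * E Q m)⁻¹ := by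
      rw [cc, show k+m-k = m from by omega]
    have hnk : n - (k+m) = n-k-m := by omega
    have hsign : (-1:ℂ)^(k+m) * (-1:ℂ)^k = (-1:ℂ)^m := by
      have hkk : (-1:ℂ)^k * (-1:ℂ)^k = 1 := by rw [← mul_pow]; norm_num
      rw [pow_add]
      calc (-1:ℂ)^k * (-1)^m * (-1)^k = ((-1:ℂ)^k*(-1)^k) * (-1)^m := by ring
        _ = (-1)^m := by rw [hkk]; ring
    rw [hcc, hnk, cc, mul_inv]
    linear_combination (Q^(k.choose 2) * x^k * (E Q k)⁻¹ * (E Q m)⁻¹ * (E Q (n-k-m))⁻¹) * hsign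
  rw [Finset.sum_congr rfl inner]
  have hfil : ∀ k ∈ range (n+1),
      Q^(k.choose 2) * x^k * (E Q k)⁻¹ * Sg Q (n-k) ≠ 0 → (n-k) % 2 = 0 := by
    intro k hk hne
    by_contra hodd
    apply hne
    rw [show n-k = 2*((n-k)/2)+1 from by omega, (gauss hQ ((n-k)/2)).2.1, mul_zero]
  rw [← Finset.sum_filter_of_ne hfil]
  apply Finset.sum_nbij' (i := fun j => n - 2*j) (j := fun k => (n-k)/2)
  · intro a ha
    simp only [Finset.mem_range] at ha
    simp only [Finset.mem_filter, Finset.mem_range]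
    omega
  · intro a ha
    simp only [Finset.mem_filter, Finset.mem_range] at ha
    simp only [Finset.mem_range]
    omega
  · intro a ha
    simp only [Finset.mem_range] at ha
    omega
  · intro a ha
    simp only [Finset.mem_filter, Finset.mem_range] at ha
    omega
  · intro a ha
    simp only [Finset.mem_range] at ha
    rw [show n - (n-2*a) = 2*a from by omega, (gauss hQ a).1, mul_inv]
    ring

end Aux

namespace Aux2

lemma one_sub_ne {z : ℂ} (h : ‖z‖ < 1) : 1 - z ≠ 0 := by
  intro hz
  have : z = 1 := by linear_combination -hz
  rw [this] at h
  simp at h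

lemma weier (a : ℕ → ℝ) (h0 : ∀ k, 0 ≤ a k) (h1 : ∀ k, a k ≤ 1) (n : ℕ) :
    1 - ∑ k ∈ range n, a k ≤ ∏ k ∈ range n, (1 - a k) := by
  induction n with
  | zero => simp
  | succ m ih =>
    have hp : (0:ℝ) ≤ ∏ k ∈ range m, (1 - a k) :=
      Finset.prod_nonneg (fun k _ => by linarith [h1 k])
    have hs : (0:ℝ) ≤ ∑ k ∈ range m, a k := Finset.sum_nonneg (fun k _ => h0 k)
    rw [Finset.prod_range_succ, Finset.sum_range_succ]
    nlinarith [mul_le_mul_of_nonneg_right ih (by linarith [h1 m] : (0:ℝ) ≤ 1 - a m), h0 m, h1 m]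

lemma geo_tail (r : ℝ) (hr0 : 0 ≤ r) (hr1 : r < 1) (K M : ℕ) :
    ∑ m ∈ range M, r^(K+1+m) ≤ r^(K+1) / (1-r) := by
  have h1r : (0:ℝ) < 1 - r := by linarith
  have hpull : ∑ m ∈ range M, r^(K+1+m) = r^(K+1) * ∑ m ∈ range M, r^m := by
    rw [Finset.mul_sum]
    exact Finset.sum_congr rfl fun m _ => by rw [pow_add]
  rw [hpull]
  have hgeo : ∑ m ∈ range M, r^m ≤ 1 / (1-r) := by
    rw [geom_sum_eq (by intro h; rw [h] at hr1; linarith) M]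
    rw [show r^M - 1 = -(1-r^M) from by ring, show r - 1 = -(1-r) from by ring,
      neg_div_neg_eq]
    rw [div_le_div_iff₀ h1r h1r]
    have hM : (0:ℝ) ≤ r^M := pow_nonneg hr0 M
    nlinarith
  calc r^(K+1) * ∑ m ∈ range M, r^m ≤ r^(K+1) * (1/(1-r)) :=
        mul_le_mul_of_nonneg_left hgeo (pow_nonneg hr0 _)
    _ = r^(K+1) / (1-r) := by ring

lemma qPoch_lower (c : ℂ) (hc : ‖c‖ < 1) :
    ∃ δ : ℝ, 0 < δ ∧ ∀ n, δ ≤ ‖qPoch c c n‖ := by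
  set r := ‖c‖ with hr
  have hr0 : 0 ≤ r := norm_nonneg c
  have h1r : (0:ℝ) < 1 - r := by linarith
  have hfacle : ∀ k : ℕ, r^(k+1) ≤ 1 := fun k => le_of_lt (pow_lt_one₀ hr0 hc (by omega : k+1 ≠ 0))
  have hfac : ∀ k : ℕ, 1 - r^(k+1) ≤ ‖1 - c * c^k‖ := by
    intro k
    have hpow : ‖c * c^k‖ = r^(k+1) := by rw [norm_mul, norm_pow, pow_succ']
    calc 1 - r^(k+1) = ‖(1:ℂ)‖ - ‖c * c^k‖ := by rw [hpow]; norm_num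
      _ ≤ ‖1 - c * c^k‖ := norm_sub_norm_le _ _
  have hfac0 : ∀ k : ℕ, (0:ℝ) ≤ 1 - r^(k+1) := fun k => by linarith [hfacle k]
  have hfaclt : ∀ k : ℕ, (0:ℝ) < 1 - r^(k+1) :=
    fun k => by have := pow_lt_one₀ hr0 hc (by omega : k+1 ≠ 0); linarith
  have hnorm : ∀ n, (∏ k ∈ range n, (1 - r^(k+1))) ≤ ‖qPoch c c n‖ := by
    intro n
    rw [qPoch, norm_prod]
    exact Finset.prod_le_prod (fun k _ => hfac0 k) (fun k _ => hfac k)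
  -- choose K with tail small
  obtain ⟨K, hK⟩ : ∃ K, r^(K+1) ≤ (1-r)/2 := by
    obtain ⟨K, hK⟩ := exists_pow_lt_of_lt_one (by linarith : (0:ℝ) < (1-r)/2) hc
    refine ⟨K, ?_⟩
    have : r^(K+1) ≤ r^K := pow_le_pow_of_le_one hr0 (le_of_lt hc) (by omega)
    linarith
  set P : ℕ → ℝ := fun n => ∏ k ∈ range n, (1 - r^(k+1)) with hP
  have hPpos : ∀ n, 0 < P n := fun n => Finset.prod_pos (fun k _ => hfaclt k)
  refine ⟨P K * (1/2), mul_pos (hPpos K) (by norm_num), ?_⟩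
  intro n
  have key : P K * (1/2) ≤ P n := by
    rcases le_or_gt n K with hnK | hKn
    · -- P K ≤ P n
      have : P K ≤ P n := by
        have hsplit : P n * ∏ k ∈ Ico n K, (1 - r^(k+1)) = P K :=
          Finset.prod_range_mul_prod_Ico _ hnK
        have hle1 : ∏ k ∈ Ico n K, (1 - r^(k+1)) ≤ 1 :=
          Finset.prod_le_one (fun k _ => hfac0 k) (fun k _ => by have := pow_nonneg hr0 (k+1); linarith)
        nlinarith [hPpos n, Finset.prod_nonneg (fun k (_ : k ∈ Ico n K) => hfac0 k)]
      nlinarith [hPpos K]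
    · have hsplit : P K * ∏ k ∈ Ico K n, (1 - r^(k+1)) = P n :=
        Finset.prod_range_mul_prod_Ico _ (le_of_lt hKn)
      have htail : (1:ℝ)/2 ≤ ∏ k ∈ Ico K n, (1 - r^(k+1)) := by
        rw [Finset.prod_Ico_eq_prod_range]
        have hW := weier (fun m => r^(K+m+1)) (fun m => pow_nonneg hr0 _)
          (fun m => by
            have h1 : r^(K+m+1) < 1 := pow_lt_one₀ hr0 hc (by omega : K+m+1 ≠ 0)
            linarith) (n - K)
        have hsum : ∑ m ∈ range (n-K), r^(K+m+1) ≤ 1/2 := by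
          have h := geo_tail r hr0 hc K (n-K)
          have he : ∑ m ∈ range (n-K), r^(K+m+1) = ∑ m ∈ range (n-K), r^(K+1+m) :=
            Finset.sum_congr rfl (fun m _ => by congr 1; omega)
          have hdiv : r^(K+1)/(1-r) ≤ 1/2 := by
            rw [div_le_div_iff₀ h1r (by norm_num : (0:ℝ) < 2)]
            linarith
          rw [he]
          linarith
        calc (1:ℝ)/2 ≤ 1 - ∑ m ∈ range (n-K), r^(K+m+1) := by linarith
          _ ≤ ∏ m ∈ range (n-K), (1 - r^(K+m+1)) := hW
      calc P K * (1/2) ≤ P K * ∏ k ∈ Ico K n, (1 - r^(k+1)) :=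
            mul_le_mul_of_nonneg_left htail (le_of_lt (hPpos K))
        _ = P n := hsplit
  calc P K * (1/2) ≤ P n := key
    _ ≤ ‖qPoch c c n‖ := hnorm n

lemma summable_pow_sq (a r : ℝ) (ha : 0 ≤ a) (hr0 : 0 ≤ r) (hr1 : r < 1) :
    Summable (fun i : ℕ => a ^ i * r ^ (i^2)) := by
  obtain ⟨N, hN⟩ := exists_pow_lt_of_lt_one (by positivity : (0:ℝ) < (a+1)⁻¹) hr1
  have hρ : a * r^N < 1 := by
    have h1 : a * r^N ≤ a * (a+1)⁻¹ := mul_le_mul_of_nonneg_left (le_of_lt hN) ha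
    have h2 : a * (a+1)⁻¹ < 1 := by
      rw [← div_eq_mul_inv, div_lt_one (by positivity)]
      linarith
    linarith
  have hρ0 : 0 ≤ a * r^N := by positivity
  apply (summable_nat_add_iff N).1
  have key : ∀ i : ℕ, a^(i+N) * r^((i+N)^2) ≤ (a^N * r^(N^2)) * (a * r^N)^i := by
    intro i
    have hexp : N*i + N^2 ≤ (i+N)^2 := by nlinarith [sq_nonneg i, Nat.zero_le (i*i)]
    have h1 : r^((i+N)^2) ≤ r^(N*i + N^2) :=
      pow_le_pow_of_le_one hr0 (le_of_lt hr1) hexp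
    calc a^(i+N) * r^((i+N)^2) ≤ a^(i+N) * r^(N*i+N^2) :=
          mul_le_mul_of_nonneg_left h1 (pow_nonneg ha _)
      _ = (a^N * r^(N^2)) * (a * r^N)^i := by
          rw [pow_add a, pow_add r, pow_mul, mul_pow, ← pow_mul r N i]
          ring
  exact Summable.of_nonneg_of_le (fun i => by positivity) key
    (((summable_geometric_of_lt_one hρ0 hρ)).mul_left _)

end Aux2

namespace Aux3

def eL : (Σ _n : ℕ, Fin (_n/2+1)) ≃ ℕ × ℕ where
  toFun s := (s.1 - 2*s.2.1, s.2.1)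
  invFun p := ⟨p.1 + 2*p.2, ⟨p.2, by omega⟩⟩
  left_inv := by
    rintro ⟨n, j⟩
    have hj : j.1 ≤ n/2 := by omega
    refine Sigma.ext (by simp; omega) ?_
    refine (Fin.heq_ext_iff (by simp; omega)).2 ?_
    simp
  right_inv := by
    rintro ⟨i, j⟩
    simp

def eR : (Σ _n : ℕ, Fin (_n+1)) ≃ ℕ × ℕ where
  toFun s := (s.1 - s.2.1, s.2.1)
  invFun p := ⟨p.1 + p.2, ⟨p.2, by omega⟩⟩
  left_inv := by
    rintro ⟨n, j⟩
    have hj : j.1 ≤ n := by omega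
    refine Sigma.ext (by simp; omega) ?_
    refine (Fin.heq_ext_iff (by simp; omega)).2 ?_
    simp
  right_inv := by
    rintro ⟨i, j⟩
    simp

lemma regroupL (f : ℕ × ℕ → ℂ) (hf : Summable f) :
    ∑' p, f p = ∑' n : ℕ, ∑ j ∈ range (n/2+1), f (n - 2*j, j) := by
  rw [← eL.tsum_eq f]
  rw [show (fun s => f (eL s)) = f ∘ eL from rfl, Summable.tsum_sigma (eL.summable_iff.2 hf)]
  refine tsum_congr fun n => ?_
  rw [tsum_fintype]
  exact Fin.sum_univ_eq_sum_range (fun j => f (n - 2*j, j)) (n/2+1)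

lemma regroupR (f : ℕ × ℕ → ℂ) (hf : Summable f) :
    ∑' p, f p = ∑' n : ℕ, ∑ j ∈ range (n+1), f (n - j, j) := by
  rw [← eR.tsum_eq f]
  rw [show (fun s => f (eR s)) = f ∘ eR from rfl, Summable.tsum_sigma (eR.summable_iff.2 hf)]
  refine tsum_congr fun n => ?_
  rw [tsum_fintype]
  exact Fin.sum_univ_eq_sum_range (fun j => f (n - j, j)) (n+1)

end Aux3


lemma qPoch_norm_le (a Q : ℂ) (hQ1 : ‖Q‖ ≤ 1) (n : ℕ) : ‖qPoch a Q n‖ ≤ (1+‖a‖)^n := by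
  rw [qPoch, norm_prod]
  calc ∏ k ∈ range n, ‖1 - a * Q^k‖ ≤ ∏ k ∈ range n, (1+‖a‖) := by
        apply Finset.prod_le_prod (fun k _ => norm_nonneg _)
        intro k _
        calc ‖1 - a*Q^k‖ ≤ ‖(1:ℂ)‖ + ‖a*Q^k‖ := norm_sub_le _ _
          _ = 1 + ‖a‖*‖Q‖^k := by rw [norm_one, norm_mul, norm_pow]
          _ ≤ 1 + ‖a‖ := by
              have h1 : ‖Q‖^k ≤ 1 := pow_le_one₀ (norm_nonneg Q) hQ1
              nlinarith [norm_nonneg a]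
    _ = (1+‖a‖)^n := by rw [Finset.prod_const, Finset.card_range]

lemma hc2' (i : ℕ) : 2*(i.choose 2) = i^2 - i := by
  induction i with
  | zero => simp
  | succ m ih =>
    rw [Aux.choose_succ_two]
    have h1 : (m+1)^2 = m^2 + 2*m + 1 := by ring
    have h2 : m ≤ m^2 := Nat.le_self_pow (two_ne_zero) m
    omega

lemma exp1 (i j : ℕ) : 2*i^2 + 4*j^2 + 4*i*j - i = (i+2*j)^2 + 2*(i.choose 2) := by
  have hc2 := hc2' i
  have hring : 2*i^2 + 4*j^2 + 4*i*j = (i+2*j)^2 + i^2 := by ring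
  have hii : i ≤ i^2 := Nat.le_self_pow (two_ne_zero) i
  omega

set_option maxHeartbeats 1600000 in
theorem stmt_10 (x y q : ℂ) (hq : ‖q‖ < 1) :
    (∑' p : ℕ × ℕ,
        x ^ p.1 * y ^ (p.1 + 2 * p.2) *
          q ^ (2 * p.1 ^ 2 + 4 * p.2 ^ 2 + 4 * p.1 * p.2 - p.1) /
          (qPoch (q ^ 2) (q ^ 2) p.1 * qPoch (q ^ 4) (q ^ 4) p.2))
      = ∑' p : ℕ × ℕ,
          (-1 : ℂ) ^ p.2 * qPoch x (q ^ 2) p.2 * y ^ (p.1 + p.2) *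
            q ^ (p.1 ^ 2 + p.2 ^ 2 + 2 * p.1 * p.2) /
            (qPoch (q ^ 2) (q ^ 2) p.1 * qPoch (q ^ 2) (q ^ 2) p.2) := by
  have hq0 : (0:ℝ) ≤ ‖q‖ := norm_nonneg q
  have hq2 : ‖q^2‖ < 1 := by rw [norm_pow]; exact pow_lt_one₀ hq0 hq (by norm_num)
  have hq4 : ‖q^4‖ < 1 := by rw [norm_pow]; exact pow_lt_one₀ hq0 hq (by norm_num)
  have hQ : ∀ m : ℕ, 1 - (q^2)^(m+1) ≠ 0 := fun m => Aux2.one_sub_ne (by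
    rw [norm_pow]; exact pow_lt_one₀ (norm_nonneg _) hq2 (by omega))
  obtain ⟨δ1, hδ1, hlow1⟩ := Aux2.qPoch_lower (q^2) hq2
  obtain ⟨δ2, hδ2, hlow2⟩ := Aux2.qPoch_lower (q^4) hq4
  set fL : ℕ × ℕ → ℂ := fun p =>
    x ^ p.1 * y ^ (p.1 + 2 * p.2) * q ^ (2 * p.1 ^ 2 + 4 * p.2 ^ 2 + 4 * p.1 * p.2 - p.1) /
      (qPoch (q ^ 2) (q ^ 2) p.1 * qPoch (q ^ 4) (q ^ 4) p.2) with hfL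
  set fR : ℕ × ℕ → ℂ := fun p =>
    (-1 : ℂ) ^ p.2 * qPoch x (q ^ 2) p.2 * y ^ (p.1 + p.2) *
      q ^ (p.1 ^ 2 + p.2 ^ 2 + 2 * p.1 * p.2) /
      (qPoch (q ^ 2) (q ^ 2) p.1 * qPoch (q ^ 2) (q ^ 2) p.2) with hfR
  -- Summability of fL
  have hsumL : Summable fL := by
    apply Summable.of_norm_bounded (g := fun p : ℕ × ℕ =>
      ((δ1⁻¹ * δ2⁻¹) * ((‖x‖*‖y‖)^p.1 * ‖q‖^(p.1^2))) * ((‖y‖^2)^p.2 * ‖q‖^(p.2^2)))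
    · exact Summable.mul_of_nonneg
        (((Aux2.summable_pow_sq (‖x‖*‖y‖) ‖q‖ (by positivity) hq0 hq)).mul_left _)
        (Aux2.summable_pow_sq (‖y‖^2) ‖q‖ (by positivity) hq0 hq)
        (fun i => by positivity) (fun j => by positivity)
    · rintro ⟨i, j⟩
      have hden : δ1 * δ2 ≤ ‖qPoch (q^2) (q^2) i‖ * ‖qPoch (q^4) (q^4) j‖ :=
        mul_le_mul (hlow1 i) (hlow2 j) (le_of_lt hδ2) (norm_nonneg _)
      have hle : i^2 + j^2 ≤ 2*i^2 + 4*j^2 + 4*i*j - i := by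
        have h' : i^2 + j^2 + i ≤ 2*i^2 + 4*j^2 + 4*i*j := by
          nlinarith [Nat.le_self_pow (two_ne_zero) i]
        omega
      have hnum : ‖x‖^i * ‖y‖^(i+2*j) * ‖q‖^(2*i^2+4*j^2+4*i*j-i)
          ≤ ((‖x‖*‖y‖)^i * ‖q‖^(i^2)) * ((‖y‖^2)^j * ‖q‖^(j^2)) := by
        have hxy : (‖x‖*‖y‖)^i * (‖y‖^2)^j = ‖x‖^i * ‖y‖^(i+2*j) := by
          rw [mul_pow, ← pow_mul, pow_add]; ring
        have hqe : ‖q‖^(2*i^2+4*j^2+4*i*j-i) ≤ ‖q‖^(i^2) * ‖q‖^(j^2) := by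
          rw [← pow_add]
          exact pow_le_pow_of_le_one hq0 (le_of_lt hq) hle
        calc ‖x‖^i * ‖y‖^(i+2*j) * ‖q‖^(2*i^2+4*j^2+4*i*j-i)
            ≤ ‖x‖^i * ‖y‖^(i+2*j) * (‖q‖^(i^2) * ‖q‖^(j^2)) := by
              apply mul_le_mul_of_nonneg_left hqe (by positivity)
          _ = ((‖x‖*‖y‖)^i * ‖q‖^(i^2)) * ((‖y‖^2)^j * ‖q‖^(j^2)) := by
              rw [← hxy]; ring
      calc ‖fL (i, j)‖
          = (‖x‖^i * ‖y‖^(i+2*j) * ‖q‖^(2*i^2+4*j^2+4*i*j-i)) /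
            (‖qPoch (q^2) (q^2) i‖ * ‖qPoch (q^4) (q^4) j‖) := by
            rw [hfL]
            simp only [norm_div, norm_mul, norm_pow]
        _ ≤ (‖x‖^i * ‖y‖^(i+2*j) * ‖q‖^(2*i^2+4*j^2+4*i*j-i)) / (δ1 * δ2) := by
            gcongr
        _ ≤ (((‖x‖*‖y‖)^i * ‖q‖^(i^2)) * ((‖y‖^2)^j * ‖q‖^(j^2))) / (δ1 * δ2) := by
            gcongr
        _ = ((δ1⁻¹ * δ2⁻¹) * ((‖x‖*‖y‖)^i * ‖q‖^(i^2))) * ((‖y‖^2)^j * ‖q‖^(j^2)) := by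
            rw [div_eq_mul_inv, mul_inv]; ring
  -- Summability of fR
  have hsumR : Summable fR := by
    apply Summable.of_norm_bounded (g := fun p : ℕ × ℕ =>
      ((δ1⁻¹ * δ1⁻¹) * (‖y‖^p.1 * ‖q‖^(p.1^2))) * (((1+‖x‖)*‖y‖)^p.2 * ‖q‖^(p.2^2)))
    · exact Summable.mul_of_nonneg
        (((Aux2.summable_pow_sq (‖y‖) ‖q‖ (by positivity) hq0 hq)).mul_left _)
        (Aux2.summable_pow_sq ((1+‖x‖)*‖y‖) ‖q‖ (by positivity) hq0 hq)
        (fun i => by positivity) (fun j => by positivity)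
    · rintro ⟨i, j⟩
      have hden : δ1 * δ1 ≤ ‖qPoch (q^2) (q^2) i‖ * ‖qPoch (q^2) (q^2) j‖ :=
        mul_le_mul (hlow1 i) (hlow1 j) (le_of_lt hδ1) (norm_nonneg _)
      have hle : i^2 + j^2 ≤ i^2 + j^2 + 2*i*j := by omega
      have hX : ‖qPoch x (q^2) j‖ ≤ (1+‖x‖)^j :=
        qPoch_norm_le x (q^2) (le_of_lt hq2) j
      have hnum : ‖(-1:ℂ)^j‖ * ‖qPoch x (q^2) j‖ * ‖y‖^(i+j) * ‖q‖^(i^2+j^2+2*i*j)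
          ≤ (‖y‖^i * ‖q‖^(i^2)) * (((1+‖x‖)*‖y‖)^j * ‖q‖^(j^2)) := by
        have hsgn : ‖(-1:ℂ)^j‖ = 1 := by rw [norm_pow, norm_neg, norm_one, one_pow]
        have hqe : ‖q‖^(i^2+j^2+2*i*j) ≤ ‖q‖^(i^2) * ‖q‖^(j^2) := by
          rw [← pow_add]
          exact pow_le_pow_of_le_one hq0 (le_of_lt hq) hle
        have hy : ‖y‖^(i+j) = ‖y‖^i * ‖y‖^j := pow_add _ _ _
        calc ‖(-1:ℂ)^j‖ * ‖qPoch x (q^2) j‖ * ‖y‖^(i+j) * ‖q‖^(i^2+j^2+2*i*j)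
            = ‖qPoch x (q^2) j‖ * (‖y‖^(i+j) * ‖q‖^(i^2+j^2+2*i*j)) := by
              rw [hsgn]; ring
          _ ≤ (1+‖x‖)^j * (‖y‖^(i+j) * (‖q‖^(i^2) * ‖q‖^(j^2))) := by
              apply mul_le_mul hX ?_ (by positivity) (by positivity)
              exact mul_le_mul_of_nonneg_left hqe (by positivity)
          _ = (‖y‖^i * ‖q‖^(i^2)) * (((1+‖x‖)*‖y‖)^j * ‖q‖^(j^2)) := by
              rw [hy, mul_pow]; ring
      calc ‖fR (i, j)‖
          = (‖(-1:ℂ)^j‖ * ‖qPoch x (q^2) j‖ * ‖y‖^(i+j) * ‖q‖^(i^2+j^2+2*i*j)) /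
            (‖qPoch (q^2) (q^2) i‖ * ‖qPoch (q^2) (q^2) j‖) := by
            rw [hfR]
            simp only [norm_div, norm_mul, norm_pow]
        _ ≤ (‖(-1:ℂ)^j‖ * ‖qPoch x (q^2) j‖ * ‖y‖^(i+j) * ‖q‖^(i^2+j^2+2*i*j)) / (δ1 * δ1) := by
            gcongr
        _ ≤ ((‖y‖^i * ‖q‖^(i^2)) * (((1+‖x‖)*‖y‖)^j * ‖q‖^(j^2))) / (δ1 * δ1) := by
            gcongr
        _ = ((δ1⁻¹ * δ1⁻¹) * (‖y‖^i * ‖q‖^(i^2))) * (((1+‖x‖)*‖y‖)^j * ‖q‖^(j^2)) := by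
            rw [div_eq_mul_inv, mul_inv]; ring
  -- per-n identities
  have hGp4 : ∀ j, Aux.Gp (q^2) j = qPoch (q^4) (q^4) j := by
    intro j
    rw [Aux.Gp, show ((q^2)^2 : ℂ) = q^4 from by ring]
  have perL : ∀ n : ℕ, ∑ j ∈ range (n/2+1), fL (n - 2*j, j)
      = y^n * q^(n^2) * ∑ j ∈ range (n/2+1),
          x^(n-2*j) * (q^2)^((n-2*j).choose 2) * (Aux.E (q^2) (n-2*j) * Aux.Gp (q^2) j)⁻¹ := by
    intro n
    rw [Finset.mul_sum]
    apply Finset.sum_congr rfl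
    intro j hj
    have h2j : 2*j ≤ n := by
      have := Finset.mem_range.mp hj
      omega
    have hyexp : n - 2*j + 2*(j : ℕ) = n := by omega
    have hE : Aux.E (q^2) (n-2*j) = qPoch (q^2) (q^2) (n-2*j) := rfl
    rw [hfL]
    simp only []
    rw [hyexp]
    rw [exp1 (n-2*j) j, show n - 2*j + 2*j = n from by omega]
    rw [pow_add q (n^2), pow_mul q 2]
    rw [hGp4, hE, div_eq_mul_inv, mul_inv]
    ring
  have perR : ∀ n : ℕ, ∑ j ∈ range (n+1), fR (n - j, j)
      = y^n * q^(n^2) * ∑ j ∈ range (n+1),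
          (-1:ℂ)^j * qPoch x (q^2) j * Aux.cc (q^2) n j := by
    intro n
    rw [Finset.mul_sum]
    apply Finset.sum_congr rfl
    intro j hj
    have hjn : j ≤ n := by
      have := Finset.mem_range.mp hj
      omega
    have hyexp : n - j + j = n := by omega
    have hcc : Aux.cc (q^2) n j = (qPoch (q^2) (q^2) j * qPoch (q^2) (q^2) (n-j))⁻¹ := rfl
    have hexp : (n-j)^2 + j^2 + 2*(n-j)*j = n^2 := by
      have h : (n-j)^2 + j^2 + 2*(n-j)*j = ((n-j)+j)^2 := by ring
      rw [h, hyexp]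
    rw [hfR]
    simp only []
    rw [hyexp, hexp, hcc, div_eq_mul_inv, mul_inv, mul_inv]
    ring
  calc (∑' p : ℕ × ℕ, fL p)
      = ∑' n : ℕ, ∑ j ∈ range (n/2+1), fL (n - 2*j, j) := Aux3.regroupL fL hsumL
    _ = ∑' n : ℕ, y^n * q^(n^2) * ∑ j ∈ range (n/2+1),
          x^(n-2*j) * (q^2)^((n-2*j).choose 2) * (Aux.E (q^2) (n-2*j) * Aux.Gp (q^2) j)⁻¹ :=
        tsum_congr perL
    _ = ∑' n : ℕ, y^n * q^(n^2) * ∑ j ∈ range (n+1),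
          (-1:ℂ)^j * qPoch x (q^2) j * Aux.cc (q^2) n j :=
        tsum_congr fun n => by rw [Aux.core hQ x n]
    _ = ∑' n : ℕ, ∑ j ∈ range (n+1), fR (n - j, j) := tsum_congr fun n => (perR n).symm
    _ = ∑' p : ℕ × ℕ, fR p := (Aux3.regroupR fR hsumR).symm
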